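/- Let f : R^d → R be differentiable and L-smooth with finite infimum f⋆. Let x, x̃ ∈ R^d and g = ∇f(x) + ξ with ξ zero-mean and E‖ξ‖² ≤ M‖∇f(x)‖² + σ². Define x̃⁺ = x̃ − γg with 0 < γ ≤ 1/(2L(1+M)). Then E f(x̃⁺) ≤ f(x̃) − (γ/4)‖∇f(x)‖² + (γ²Lσ²)/2 + (γL²/2)‖x − x̃‖². -/

import Mathlib

open MeasureTheory
open scoped RealInnerProductSpace

lemma descent_lemma {E : Type*} [NormedAddCommGroup E] [InnerProductSpace ℝ E]
    [CompleteSpace E]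
    (f : E → ℝ) (g : E → E) (L : ℝ) (hL : 0 ≤ L)
    (hgrad : ∀ y, HasGradientAt f (g y) y)
    (hlip : ∀ y z, ‖g y - g z‖ ≤ L * ‖y - z‖) (y v : E) :
    f (y + v) ≤ f y + ⟪g y, v⟫ + L / 2 * ‖v‖ ^ 2 := by
  set C : ℝ := ⟪g y, v⟫ with hC
  set K : ℝ := L / 2 * ‖v‖ ^ 2 with hK
  have hfd : ∀ t : ℝ, HasDerivAt (fun t : ℝ => f (y + t • v)) ⟪g (y + t • v), v⟫ t := by
    intro t
    have hc : HasDerivAt (fun t : ℝ => y + t • v) v t := by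
      simpa using ((hasDerivAt_id t).smul_const v).const_add y
    have := ((hgrad (y + t • v)).hasFDerivAt.comp_hasDerivAt t hc)
    simpa [InnerProductSpace.toDual_apply_apply, Function.comp_def] using this
  set h : ℝ → ℝ := fun t => f (y + t • v) - t * C - K * t ^ 2 with hh
  have hhd : ∀ t : ℝ, HasDerivAt h (⟪g (y + t • v), v⟫ - C - K * (2 * t)) t := by
    intro t
    have h1 := (hfd t).sub (hasDerivAt_mul_const (x := t) C)
    have h2 := (hasDerivAt_pow 2 t).const_mul K
    simpa [hh, pow_one, Pi.sub_def] using h1.sub h2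
  have hanti : AntitoneOn h (Set.Icc (0:ℝ) 1) := by
    apply antitoneOn_of_deriv_nonpos (convex_Icc 0 1)
    · have hdiff : Differentiable ℝ h := fun t => (hhd t).differentiableAt
      exact hdiff.continuous.continuousOn
    · intro t ht
      exact (hhd t).differentiableAt.differentiableWithinAt
    · intro t ht
      rw [interior_Icc] at ht
      rw [(hhd t).deriv]
      have hbd : ⟪g (y + t • v) - g y, v⟫ ≤ L * t * ‖v‖ ^ 2 := by
        calc ⟪g (y + t • v) - g y, v⟫ ≤ ‖g (y + t • v) - g y‖ * ‖v‖ :=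
              real_inner_le_norm _ _
          _ ≤ (L * ‖(y + t • v) - y‖) * ‖v‖ := by
              gcongr; exact hlip _ _
          _ = L * t * ‖v‖ ^ 2 := by
              rw [add_sub_cancel_left, norm_smul, Real.norm_eq_abs,
                abs_of_pos ht.1]; ring
      have : ⟪g (y + t • v), v⟫ - C = ⟪g (y + t • v) - g y, v⟫ := by
        rw [inner_sub_left, hC]
      rw [this]
      have : K * (2 * t) = L * t * ‖v‖ ^ 2 := by rw [hK]; ring
      linarith [hbd, this.le, this.ge]
  have h10 : h 1 ≤ h 0 := hanti (by norm_num) (by norm_num) (by norm_num)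
  have e1 : h 1 = f (y + v) - C - K := by simp [hh]
  have e0 : h 0 = f y := by simp [hh]
  rw [e1, e0] at h10
  linarith

set_option maxHeartbeats 1600000 in
theorem stmt_18 {d : ℕ} {Ω : Type*} [MeasurableSpace Ω] {P : Measure Ω}
    [IsProbabilityMeasure P]
    (f : EuclideanSpace ℝ (Fin d) → ℝ)
    (g : EuclideanSpace ℝ (Fin d) → EuclideanSpace ℝ (Fin d))
    (L M sig2 γ fstar : ℝ) (hL : 0 < L) (hM : 0 ≤ M) (hsig : 0 ≤ sig2)
    (hgrad : ∀ y, HasGradientAt f (g y) y)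
    (hlip : ∀ y z, ‖g y - g z‖ ≤ L * ‖y - z‖)
    (hfstar : IsGLB (Set.range f) fstar)
    (x xt : EuclideanSpace ℝ (Fin d))
    (ξ : Ω → EuclideanSpace ℝ (Fin d)) (hξmeas : Measurable ξ) (hξL2 : MemLp ξ 2 P)
    (hmean : ∫ ω, ξ ω ∂P = 0)
    (hnoise : ∫ ω, ‖ξ ω‖ ^ 2 ∂P ≤ M * ‖g x‖ ^ 2 + sig2)
    (hγ : 0 < γ) (hγle : γ ≤ 1 / (2 * L * (1 + M))) :
    ∫ ω, f (xt - γ • (g x + ξ ω)) ∂P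
      ≤ f xt - γ / 4 * ‖g x‖ ^ 2 + γ ^ 2 * L * sig2 / 2
        + γ * L ^ 2 / 2 * ‖x - xt‖ ^ 2 := by
  classical
  set G : ℝ := ‖g x‖ ^ 2 with hG
  -- upper bound function
  set U : Ω → ℝ := fun ω => f xt - γ * ⟪g xt, g x⟫ - γ * ⟪g xt, ξ ω⟫
      + L / 2 * γ ^ 2 * (‖g x‖ ^ 2 + 2 * ⟪g x, ξ ω⟫ + ‖ξ ω‖ ^ 2) with hU
  -- pointwise bound
  have hpt : ∀ ω, f (xt - γ • (g x + ξ ω)) ≤ U ω := by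
    intro ω
    have hd := descent_lemma f g L hL.le hgrad hlip xt (-(γ • (g x + ξ ω)))
    have he : xt + -(γ • (g x + ξ ω)) = xt - γ • (g x + ξ ω) := by abel
    rw [he] at hd
    refine hd.trans_eq ?_
    rw [hU]
    simp only [inner_neg_right, inner_smul_right, norm_neg, norm_smul,
      Real.norm_eq_abs, abs_of_pos hγ, inner_add_right]
    rw [mul_pow, norm_add_sq_real]
    ring
  -- integrability facts
  have hξint : Integrable ξ P := hξL2.integrable one_le_two
  have hnsq : Integrable (fun ω => ‖ξ ω‖ ^ 2) P := hξL2.norm.integrable_sq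
  have hin1 : Integrable (fun ω => ⟪g xt, ξ ω⟫) P := hξint.const_inner _
  have hin2 : Integrable (fun ω => ⟪g x, ξ ω⟫) P := hξint.const_inner _
  set c : ℝ := f xt - γ * ⟪g xt, g x⟫ + L / 2 * γ ^ 2 * ‖g x‖ ^ 2 with hc
  have i1 : Integrable (fun ω => (-γ) * ⟪g xt, ξ ω⟫) P := hin1.const_mul _
  have i2 : Integrable (fun ω => (L * γ ^ 2) * ⟪g x, ξ ω⟫) P := hin2.const_mul _
  have i3 : Integrable (fun ω => (L / 2 * γ ^ 2) * ‖ξ ω‖ ^ 2) P := hnsq.const_mul _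
  have i23 : Integrable (fun ω => (L * γ ^ 2) * ⟪g x, ξ ω⟫
      + (L / 2 * γ ^ 2) * ‖ξ ω‖ ^ 2) P := i2.add i3
  have i123 : Integrable (fun ω => (-γ) * ⟪g xt, ξ ω⟫
      + ((L * γ ^ 2) * ⟪g x, ξ ω⟫ + (L / 2 * γ ^ 2) * ‖ξ ω‖ ^ 2)) P := i1.add i23
  have hUeq : U = fun ω => c + ((-γ) * ⟪g xt, ξ ω⟫
      + ((L * γ ^ 2) * ⟪g x, ξ ω⟫ + (L / 2 * γ ^ 2) * ‖ξ ω‖ ^ 2)) := by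
    funext ω; rw [hU, hc]; ring
  have hUint : Integrable U P := by
    rw [hUeq]
    exact (integrable_const c).add i123
  have hfc : Continuous f := by
    rw [continuous_iff_continuousAt]
    exact fun y => (hgrad y).hasFDerivAt.differentiableAt.continuousAt
  have hmeas : AEStronglyMeasurable (fun ω => f (xt - γ • (g x + ξ ω))) P := by
    apply Continuous.comp_aestronglyMeasurable (hfc)
    exact (aestronglyMeasurable_const.sub
      ((aestronglyMeasurable_const.add hξmeas.aestronglyMeasurable).const_smul γ))
  have hlow : ∀ ω, fstar ≤ f (xt - γ • (g x + ξ ω)) := fun ω =>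
    hfstar.1 (Set.mem_range_self _)
  have hcint : Integrable (fun ω => f (xt - γ • (g x + ξ ω))) P := by
    apply Integrable.mono' ((integrable_const |fstar|).add hUint.abs) hmeas
    filter_upwards with ω
    simp only [Pi.add_apply]
    rw [Real.norm_eq_abs, abs_le]
    constructor
    · have := hlow ω; have := neg_abs_le fstar; have := abs_nonneg (U ω); linarith
    · have := hpt ω; have := le_abs_self (U ω); have := abs_nonneg fstar; linarith
  have hle : ∫ ω, f (xt - γ • (g x + ξ ω)) ∂P ≤ ∫ ω, U ω ∂P :=
    integral_mono hcint hUint hpt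
  -- compute ∫ U
  set N : ℝ := ∫ ω, ‖ξ ω‖ ^ 2 ∂P with hN
  have hz1 : ∫ ω, ⟪g xt, ξ ω⟫ ∂P = 0 := by
    rw [integral_inner hξint, hmean, inner_zero_right]
  have hz2 : ∫ ω, ⟪g x, ξ ω⟫ ∂P = 0 := by
    rw [integral_inner hξint, hmean, inner_zero_right]
  have hUval : ∫ ω, U ω ∂P
      = f xt - γ * ⟪g xt, g x⟫ + L / 2 * γ ^ 2 * (‖g x‖ ^ 2 + N) := by
    simp only [hUeq]
    rw [integral_add (integrable_const c) i123,
      integral_add i1 i23, integral_add i2 i3,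
      integral_const_mul, integral_const_mul, integral_const_mul, hz1, hz2,
      integral_const, ← hN]
    simp only [measure_univ, probReal_univ, ENNReal.toReal_one, smul_eq_mul, one_mul,
      mul_zero, add_zero, zero_add, hc]
    ring
  -- scalar estimates
  have hNnn : 0 ≤ N := integral_nonneg fun ω => sq_nonneg _
  set D : ℝ := ‖x - xt‖ with hD
  have hI : ‖g x‖ ^ 2 - L * D * ‖g x‖ ≤ ⟪g xt, g x⟫ := by
    have h1 : ⟪g x - g xt, g x⟫ ≤ ‖g x - g xt‖ * ‖g x‖ := real_inner_le_norm _ _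
    have h2 : ‖g x - g xt‖ * ‖g x‖ ≤ (L * D) * ‖g x‖ := by
      apply mul_le_mul_of_nonneg_right _ (norm_nonneg _)
      exact hlip x xt
    have h3 : ⟪g xt, g x⟫ = ⟪g x, g x⟫ - ⟪g x - g xt, g x⟫ := by
      rw [inner_sub_left]; ring
    rw [h3, real_inner_self_eq_norm_sq]
    linarith
  have hsmall : γ * (2 * L * (1 + M)) ≤ 1 := by
    have h2 : (0:ℝ) < 2 * L * (1 + M) := by positivity
    calc γ * (2 * L * (1 + M)) ≤ (1 / (2 * L * (1 + M))) * (2 * L * (1 + M)) := by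
          apply mul_le_mul_of_nonneg_right hγle h2.le
      _ = 1 := by field_simp
  -- finish
  rw [hUval] at hle
  refine hle.trans ?_
  have a1 : γ * (‖g x‖ ^ 2 - L * D * ‖g x‖) ≤ γ * ⟪g xt, g x⟫ :=
    mul_le_mul_of_nonneg_left hI hγ.le
  have a2 : γ * (L * D * ‖g x‖) ≤ γ / 2 * (L ^ 2 * D ^ 2 + ‖g x‖ ^ 2) := by
    nlinarith [sq_nonneg (L * D - ‖g x‖), hγ.le]
  have a3 : L / 2 * γ ^ 2 * N ≤ L / 2 * γ ^ 2 * (M * ‖g x‖ ^ 2 + sig2) :=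
    mul_le_mul_of_nonneg_left hnoise (by positivity)
  have a4 : L / 2 * γ ^ 2 * ((1 + M) * ‖g x‖ ^ 2) ≤ γ / 4 * ‖g x‖ ^ 2 := by
    nlinarith [mul_le_mul_of_nonneg_right hsmall
      (show (0:ℝ) ≤ γ * ‖g x‖ ^ 2 / 4 by positivity)]
  rw [hG]
  linarith [a1, a2, a3, a4]
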